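/- Let φ : ℝ^k → (-∞, +∞] be proper convex l.s.c., let u', v' ∈ Dom(∂φ), z ∈ ℝ^k, and t < 0 such that u' + t•z ∈ Dom(∂φ). Then (φ(u'+tz) - φ(u'))/t ≥ (φ(u' + t(u'-v')) - φ(u'))/t - |∂φ|₀(u'+tz)·|z - (u'-v')|, where |∂φ|₀(w) denotes the minimal norm of elements of ∂φ(w). -/

import Mathlib

open Filter Topology

variable {k : ℕ}

/-- Difference quotient `(φ(u + t•z) - φ(u))/t` in the extended reals. -/
noncomputable def DQ (φ : EuclideanSpace ℝ (Fin k) → EReal)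
    (u z : EuclideanSpace ℝ (Fin k)) (t : ℝ) : EReal :=
  ((t⁻¹ : ℝ) : EReal) * (φ (u + t • z) - φ u)

/-- Convexity of an `EReal`-valued function. -/
def ConvexE (φ : EuclideanSpace ℝ (Fin k) → EReal) : Prop :=
  ∀ x y : EuclideanSpace ℝ (Fin k), ∀ t : ℝ, 0 ≤ t → t ≤ 1 →
    φ ((1 - t) • x + t • y) ≤ ((1 - t : ℝ) : EReal) * φ x + (t : EReal) * φ y

/-- Right directional derivative `φ'₊(u; z) = inf_{t>0} (φ(u+tz)-φ(u))/t`. -/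
noncomputable def dplus (φ : EuclideanSpace ℝ (Fin k) → EReal)
    (u z : EuclideanSpace ℝ (Fin k)) : EReal :=
  ⨅ t : {t : ℝ // 0 < t}, DQ φ u z t

/-- Left directional derivative `φ'₋(u; z) = sup_{t<0} (φ(u+tz)-φ(u))/t`. -/
noncomputable def dminus (φ : EuclideanSpace ℝ (Fin k) → EReal)
    (u z : EuclideanSpace ℝ (Fin k)) : EReal :=
  ⨆ t : {t : ℝ // t < 0}, DQ φ u z t

/-- The subdifferential `∂φ(u)`. -/
def subdiff (φ : EuclideanSpace ℝ (Fin k) → EReal)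
    (u : EuclideanSpace ℝ (Fin k)) : Set (EuclideanSpace ℝ (Fin k)) :=
  {us | ∀ v, ((inner ℝ us (v - u) : ℝ) : EReal) + φ u ≤ φ v}

/-- `φ'_*(u; z)`: liminf of `φ'₋(v; z)` over `v → u`, `v ∈ Dom(∂φ)`. -/
noncomputable def dstarLow (φ : EuclideanSpace ℝ (Fin k) → EReal)
    (u z : EuclideanSpace ℝ (Fin k)) : EReal :=
  Filter.liminf (fun v => dminus φ v z) (𝓝[{v | (subdiff φ v).Nonempty}] u)

/-- `φ'^*(u; z)`: limsup of `φ'₊(v; z)` over `v → u`, `v ∈ Dom(∂φ)`. -/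
noncomputable def dstarUp (φ : EuclideanSpace ℝ (Fin k) → EReal)
    (u z : EuclideanSpace ℝ (Fin k)) : EReal :=
  Filter.limsup (fun v => dplus φ v z) (𝓝[{v | (subdiff φ v).Nonempty}] u)

/-- `|∂φ|₀(w)`: the minimal norm of elements of `∂φ(w)` (as a real number). -/
noncomputable def minNorm (φ : EuclideanSpace ℝ (Fin k) → EReal)
    (w : EuclideanSpace ℝ (Fin k)) : ℝ :=
  sInf (norm '' subdiff φ w)


lemma phi_ne_top' {k : ℕ} (φ : EuclideanSpace ℝ (Fin k) → EReal)
    (hproper : ∃ x, φ x ≠ ⊤) {u : EuclideanSpace ℝ (Fin k)}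
    (hu : (subdiff φ u).Nonempty) : φ u ≠ ⊤ := by
  obtain ⟨x0, hx0⟩ := hproper
  obtain ⟨us, hus⟩ := hu
  have h := hus x0
  intro htop
  rw [htop] at h
  simp at h
  exact hx0 h

theorem diffQuot_perturb {k : ℕ} (φ : EuclideanSpace ℝ (Fin k) → EReal)
    (hconv : ConvexE φ) (hbot : ∀ x, φ x ≠ ⊥) (hproper : ∃ x, φ x ≠ ⊤)
    (hlsc : LowerSemicontinuous φ)
    (u' v' z : EuclideanSpace ℝ (Fin k))
    (hu' : (subdiff φ u').Nonempty) (hv' : (subdiff φ v').Nonempty)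
    (t : ℝ) (ht : t < 0) (htz : (subdiff φ (u' + t • z)).Nonempty) :
    DQ φ u' (u' - v') t - ((minNorm φ (u' + t • z) * ‖z - (u' - v')‖ : ℝ) : EReal)
      ≤ DQ φ u' z t := by
  have hu'top : φ u' ≠ ⊤ := phi_ne_top' φ hproper hu'
  have hwtop : φ (u' + t • z) ≠ ⊤ := phi_ne_top' φ hproper htz
  set w := u' + t • z with hw
  set y := u' + t • (u' - v') with hy
  set a := (φ u').toReal with haa
  set b := (φ w).toReal with hbb
  have ha : φ u' = (a : EReal) := (EReal.coe_toReal hu'top (hbot u')).symm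
  have hb : φ w = (b : EReal) := (EReal.coe_toReal hwtop (hbot w)).symm
  have htinv : t⁻¹ < 0 := inv_lt_zero.mpr ht
  have hDQz : DQ φ u' z t = ((t⁻¹ * (b - a) : ℝ) : EReal) := by
    rw [DQ, ← hw, ha, hb, ← EReal.coe_sub, ← EReal.coe_mul]
  by_cases hytop : φ y = ⊤
  · have hbotL : DQ φ u' (u' - v') t = ⊥ := by
      rw [DQ, ← hy, hytop, ha, EReal.top_sub_coe]
      exact EReal.coe_mul_top_of_neg htinv
    rw [hbotL]
    simp
  · set c := (φ y).toReal with hcc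
    have hc : φ y = (c : EReal) := (EReal.coe_toReal hytop (hbot y)).symm
    have hDQ1 : DQ φ u' (u' - v') t = ((t⁻¹ * (c - a) : ℝ) : EReal) := by
      rw [DQ, ← hy, hc, ha, ← EReal.coe_sub, ← EReal.coe_mul]
    rw [hDQ1, hDQz, ← EReal.coe_sub, EReal.coe_le_coe_iff]
    set d := z - (u' - v') with hd
    set m := minNorm φ w with hm
    have key : ∀ ws' ∈ subdiff φ w, t⁻¹ * (c - a) - t⁻¹ * (b - a) ≤ ‖ws'‖ * ‖d‖ := by
      intro ws' hws'
      have h := hws' y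
      rw [hb, hc, ← EReal.coe_add, EReal.coe_le_coe_iff] at h
      have hyw : y - w = t • (-d) := by
        rw [hy, hw, hd]
        module
      have hinner : (inner ℝ ws' (y - w) : ℝ) = -(t * inner ℝ ws' d) := by
        rw [hyw, real_inner_smul_right, inner_neg_right]
        ring
      rw [hinner] at h
      set p : ℝ := inner ℝ ws' d with hp
      have h1 : t⁻¹ * (c - b) ≤ -p := by
        have h2 : -(t * p) ≤ c - b := by linarith
        have h3 : t⁻¹ * (c - b) ≤ t⁻¹ * (-(t * p)) := by
          have := mul_le_mul_of_nonpos_left h2 (le_of_lt htinv)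
          linarith
        have h4 : t⁻¹ * (-(t * p)) = -p := by
          field_simp
          rw [mul_div_cancel_left₀ p (ne_of_lt ht)]
        linarith
      have h5 : -p ≤ ‖ws'‖ * ‖d‖ := by
        have := abs_real_inner_le_norm ws' d
        rw [← hp] at this
        have := neg_abs_le p
        linarith
      have h6 : t⁻¹ * (c - a) - t⁻¹ * (b - a) = t⁻¹ * (c - b) := by ring
      linarith
    obtain ⟨ws, hws⟩ := htz
    have hdnn : (0:ℝ) ≤ ‖d‖ := norm_nonneg d
    rcases eq_or_lt_of_le hdnn with hd0 | hd0
    · have := key ws hws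
      rw [← hd0] at this ⊢
      linarith
    · have hLm : t⁻¹ * (c - a) - t⁻¹ * (b - a) ≤ m * ‖d‖ := by
        have hdiv : (t⁻¹ * (c - a) - t⁻¹ * (b - a)) / ‖d‖ ≤ m := by
          refine le_csInf ⟨‖ws‖, ⟨ws, hws, rfl⟩⟩ ?_
          rintro x ⟨ws', hws', rfl⟩
          rw [div_le_iff₀ hd0]
          exact key ws' hws'
        calc t⁻¹ * (c - a) - t⁻¹ * (b - a)
            = ((t⁻¹ * (c - a) - t⁻¹ * (b - a)) / ‖d‖) * ‖d‖ := by
              field_simp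
          _ ≤ m * ‖d‖ := mul_le_mul_of_nonneg_right hdiv (le_of_lt hd0)
      linarith
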